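/- arXiv:2006.11362 — 2 statements merged into one kernel-verified Lean document; each statement's English description precedes it below -/
import Mathlib

section
/- Under Mallows' model with a single sample (n=1), for any 0<φ<1, any integer K, any a ∈ 𝒜, any W ∈ ℒ(𝒜), and any C,C' ⊆ 𝒜∖{a} such that C dominates C' with respect to W, we have π_W({V ∈ ℒ(𝒜) : w_V(C'≻a) ≥ K}) ≤ π_W({V ∈ ℒ(𝒜) : w_V(C≻a) ≥ K}). -/
namespace Voting

open Finset

/-- A ranking over `m` alternatives: `V a` is the position of alternative `a`
(smaller position = more preferred), i.e. `a ≻_V b ↔ V a < V b`. -/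
abbrev Ranking (m : ℕ) := Equiv.Perm (Fin m)

/-- Kendall-tau distance: the number of (unordered) pairs on which `V` and `W` disagree. -/
def KT {m : ℕ} (V W : Ranking m) : ℕ :=
  (Finset.univ.filter (fun p : Fin m × Fin m => V p.1 < V p.2 ∧ W p.2 < W p.1)).card

/-- Mallows' single-sample probability of `V` given ground truth `W` and dispersion `φ`. -/
noncomputable def mallows1 {m : ℕ} (φ : ℝ) (W V : Ranking m) : ℝ :=
  φ ^ KT V W / ∑ U : Ranking m, φ ^ KT U W

/-- Mallows' model with `n` i.i.d. samples. -/
noncomputable def mallows {m : ℕ} (φ : ℝ) (n : ℕ) :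
    Ranking m → (Fin n → Ranking m) → ℝ :=
  fun W P => ∏ i, mallows1 φ W (P i)

/-- `L_{a≻others}` : rankings in which `a` is ranked at the top. -/
def Ltop {m : ℕ} (a : Fin m) : Set (Ranking m) := {V | ∀ b, b ≠ a → V a < V b}

/-- `L_{others≻a}` : rankings in which `a` is ranked at the bottom. -/
def Lbot {m : ℕ} (a : Fin m) : Set (Ranking m) := {V | ∀ b, b ≠ a → V b < V a}

/-- `w_P(b≻a)` : the weighted-majority-graph weight on the edge `b → a` of profile `P`. -/
def wpair {m n : ℕ} (P : Fin n → Ranking m) (b a : Fin m) : ℤ :=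
  ((Finset.univ.filter (fun i => P i b < P i a)).card : ℤ) -
    ((Finset.univ.filter (fun i => P i a < P i b)).card : ℤ)

/-- `w_P(B≻a) = Σ_{b∈B} w_P(b≻a)`. -/
def wset {m n : ℕ} (P : Fin n → Ranking m) (B : Finset (Fin m)) (a : Fin m) : ℤ :=
  ∑ b ∈ B, wpair P b a

/-- The threshold test on the statistic `w_P(B≻a)` with threshold `K`/randomization `Γ`. -/
noncomputable def wTest {m : ℕ} (n : ℕ) (B : Finset (Fin m)) (a : Fin m) (K Γ : ℝ) :
    (Fin n → Ranking m) → ℝ :=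
  fun P =>
    if K < ((wset P B a : ℤ) : ℝ) then 1
    else if ((wset P B a : ℤ) : ℝ) < K then 0
    else Γ

/-- The Borda score of `a` in `V`: the number of alternatives ranked below `a`. -/
def Borda {m : ℕ} (a : Fin m) (V : Ranking m) : ℕ :=
  (Finset.univ.filter (fun b => V a < V b)).card


/-- `w_V(C≻a)` for a single ranking: `+1` for each `c ∈ C` above `a`, `-1` otherwise. -/
def wset1 {m : ℕ} (V : Ranking m) (C : Finset (Fin m)) (a : Fin m) : ℤ :=
  ∑ c ∈ C, (if V c < V a then (1 : ℤ) else -1)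

/-- `C` dominates `C'` w.r.t. `W`: `C = C'` or `C'` is obtained from `C` by lowering some
alternatives according to `W` (a bijection `F : C∖C' → C'∖C` with `c ≻_W F c`). -/
def Dominates {m : ℕ} (W : Ranking m) (C C' : Finset (Fin m)) : Prop :=
  C = C' ∨ ∃ F : ((C \ C' : Finset (Fin m)) : Set (Fin m)) ≃
      ((C' \ C : Finset (Fin m)) : Set (Fin m)),
    ∀ c, W c.1 < W (F c).1


section Aux

/-- The pairing map used to compare Kendall-tau discordant pairs before/after a swap. -/
def gmap {m : ℕ} (W : Ranking m) (c c' : Fin m) (p : Fin m × Fin m) : Fin m × Fin m :=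
  (if W p.2 < W c then Equiv.swap c c' p.1 else p.1,
   if W c' < W p.1 then Equiv.swap c c' p.2 else p.2)

lemma gmap_key1 {m : ℕ} (W : Ranking m) (c c' : Fin m) (hW : W c < W c') (z : Fin m) :
    (W (Equiv.swap c c' z) < W c ↔ W z < W c) := by
  rcases eq_or_ne z c with rfl | hzc
  · simp [Equiv.swap_apply_left, lt_irrefl, lt_asymm hW]
  rcases eq_or_ne z c' with rfl | hzc'
  · simp [Equiv.swap_apply_right, lt_irrefl, lt_asymm hW]
  · rw [Equiv.swap_apply_of_ne_of_ne hzc hzc']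

lemma gmap_key2 {m : ℕ} (W : Ranking m) (c c' : Fin m) (hW : W c < W c') (z : Fin m) :
    (W c' < W (Equiv.swap c c' z) ↔ W c' < W z) := by
  rcases eq_or_ne z c with rfl | hzc
  · simp [Equiv.swap_apply_left, lt_irrefl, lt_asymm hW]
  rcases eq_or_ne z c' with rfl | hzc'
  · simp [Equiv.swap_apply_right, lt_irrefl, lt_asymm hW]
  · rw [Equiv.swap_apply_of_ne_of_ne hzc hzc']

lemma gmap_invol {m : ℕ} (W : Ranking m) (c c' : Fin m) (hW : W c < W c') (p : Fin m × Fin m) :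
    gmap W c c' (gmap W c c' p) = p := by
  obtain ⟨x, y⟩ := p
  simp only [gmap]
  by_cases b1 : W y < W c <;> by_cases b2 : W c' < W x <;>
    simp [b1, b2, gmap_key1 W c c' hW, gmap_key2 W c c' hW, Equiv.swap_apply_self]

lemma gmap_mem {m : ℕ} (V W : Ranking m) (c c' : Fin m) (hV : V c' < V c) (hW : W c < W c')
    (x y : Fin m) (h1 : V (Equiv.swap c c' x) < V (Equiv.swap c c' y)) (h2 : W y < W x) :
    V (gmap W c c' (x, y)).1 < V (gmap W c c' (x, y)).2 ∧
      W (gmap W c c' (x, y)).2 < W (gmap W c c' (x, y)).1 := by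
  have hcc' : c ≠ c' := by rintro rfl; exact lt_irrefl _ hW
  dsimp only [gmap]
  rcases eq_or_ne x c with hx | hxc
  · rw [hx] at h1 h2 ⊢
    rcases eq_or_ne y c with hy | hyc
    · rw [hy] at h2; exact absurd h2 (lt_irrefl _)
    rcases eq_or_ne y c' with hy | hyc'
    · rw [hy] at h2; exact absurd h2 (lt_asymm hW)
    · rw [Equiv.swap_apply_of_ne_of_ne hyc hyc', Equiv.swap_apply_left] at h1
      rw [if_pos h2, if_neg (lt_asymm hW), Equiv.swap_apply_left]
      exact ⟨h1, lt_trans h2 hW⟩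
  rcases eq_or_ne x c' with hx | hxc'
  · rw [hx] at h1 h2 ⊢
    rcases eq_or_ne y c with hy | hyc
    · rw [hy] at h1 h2 ⊢
      rw [Equiv.swap_apply_left, Equiv.swap_apply_right] at h1
      exact absurd h1 (lt_asymm hV)
    rcases eq_or_ne y c' with hy | hyc'
    · rw [hy] at h2; exact absurd h2 (lt_irrefl _)
    · rw [Equiv.swap_apply_of_ne_of_ne hyc hyc', Equiv.swap_apply_right] at h1
      rw [if_neg (lt_irrefl (W c'))]
      by_cases b1 : W y < W c
      · rw [if_pos b1, Equiv.swap_apply_right]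
        exact ⟨h1, b1⟩
      · rw [if_neg b1]
        exact ⟨lt_trans hV h1, h2⟩
  · rw [Equiv.swap_apply_of_ne_of_ne hxc hxc'] at h1
    rcases eq_or_ne y c with hy | hyc
    · rw [hy] at h1 h2 ⊢
      rw [Equiv.swap_apply_left] at h1
      rw [if_neg (lt_irrefl (W c))]
      by_cases b2 : W c' < W x
      · rw [if_pos b2, Equiv.swap_apply_left]
        exact ⟨h1, b2⟩
      · rw [if_neg b2]
        exact ⟨lt_trans h1 hV, h2⟩
    rcases eq_or_ne y c' with hy | hyc'
    · rw [hy] at h1 h2 ⊢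
      rw [Equiv.swap_apply_right] at h1
      rw [if_neg (lt_asymm hW), if_pos h2, Equiv.swap_apply_right]
      exact ⟨h1, lt_trans hW h2⟩
    · rw [Equiv.swap_apply_of_ne_of_ne hyc hyc'] at h1
      constructor <;> split_ifs <;> (try
        simp only [Equiv.swap_apply_of_ne_of_ne hxc hxc',
          Equiv.swap_apply_of_ne_of_ne hyc hyc']) <;>
        first | exact h1 | exact h2

lemma KT_swap_le {m : ℕ} (V W : Ranking m) (c c' : Fin m) (hV : V c' < V c)
    (hW : W c < W c') : KT (V * Equiv.swap c c') W ≤ KT V W := by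
  apply Finset.card_le_card_of_injOn (gmap W c c')
  · rintro ⟨x, y⟩ hp
    simp only [Finset.mem_coe, Finset.mem_filter, Finset.mem_univ, true_and, Equiv.Perm.mul_apply] at hp ⊢
    have hp' : (x, y) ∈ Finset.univ.filter (fun p : Fin m × Fin m =>
        V (Equiv.swap c c' p.1) < V (Equiv.swap c c' p.2) ∧ W p.2 < W p.1) := hp
    exact gmap_mem V W c c' hV hW x y (Finset.mem_filter.1 hp').2.1 (Finset.mem_filter.1 hp').2.2
  · intro p _ q _ h
    have hp := gmap_invol W c c' hW p
    rw [← hp, h, gmap_invol W c c' hW]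

lemma Zpos {m : ℕ} (φ : ℝ) (hφ0 : 0 < φ) (W : Ranking m) :
    0 < ∑ U : Ranking m, φ ^ KT U W :=
  Finset.sum_pos (fun _ _ => pow_pos hφ0 _) Finset.univ_nonempty

lemma mallows1_nonneg {m : ℕ} (φ : ℝ) (hφ0 : 0 < φ) (W V : Ranking m) :
    0 ≤ mallows1 φ W V :=
  div_nonneg (pow_nonneg hφ0.le _) (Zpos φ hφ0 W).le

lemma mallows1_mono {m : ℕ} (φ : ℝ) (hφ0 : 0 < φ) (hφ1 : φ < 1) (W V V' : Ranking m)
    (h : KT V' W ≤ KT V W) : mallows1 φ W V ≤ mallows1 φ W V' := by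
  unfold mallows1
  exact div_le_div_of_nonneg_right (pow_le_pow_of_le_one hφ0.le hφ1.le h) (Zpos φ hφ0 W).le

lemma wset1_swap {m : ℕ} (V : Ranking m) (c c' a : Fin m) (hac : a ≠ c) (hac' : a ≠ c')
    (D : Finset (Fin m)) (hcD : c ∉ D) (hc'D : c' ∉ D) :
    wset1 (V * Equiv.swap c c') (insert c D) a = wset1 V (insert c' D) a := by
  unfold wset1
  rw [Finset.sum_insert hcD, Finset.sum_insert hc'D]
  have ha : (V * Equiv.swap c c') a = V a := by
    simp [Equiv.Perm.mul_apply, Equiv.swap_apply_of_ne_of_ne hac hac']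
  congr 1
  · simp [Equiv.Perm.mul_apply, Equiv.swap_apply_left, ha]
  · refine Finset.sum_congr rfl fun d hd => ?_
    have hdc : d ≠ c := fun h => hcD (h ▸ hd)
    have hdc' : d ≠ c' := fun h => hc'D (h ▸ hd)
    simp [Equiv.Perm.mul_apply, Equiv.swap_apply_of_ne_of_ne hdc hdc',
      Equiv.swap_apply_of_ne_of_ne hac hac']

lemma step_lemma {m : ℕ} (φ : ℝ) (hφ0 : 0 < φ) (hφ1 : φ < 1) (K : ℤ) (a : Fin m)
    (W : Ranking m) (c c' : Fin m) (hW : W c < W c') (hac : a ≠ c) (hac' : a ≠ c')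
    (D : Finset (Fin m)) (hcD : c ∉ D) (hc'D : c' ∉ D) :
    ∑ V ∈ Finset.univ.filter (fun V : Ranking m => K ≤ wset1 V (insert c' D) a),
        mallows1 φ W V ≤
      ∑ V ∈ Finset.univ.filter (fun V : Ranking m => K ≤ wset1 V (insert c D) a),
        mallows1 φ W V := by
  have hcc' : c ≠ c' := by rintro rfl; exact lt_irrefl _ hW
  set τ := Equiv.swap c c' with hτ
  set C : Finset (Fin m) := insert c D with hC
  set C' : Finset (Fin m) := insert c' D with hC'
  set A : Finset (Ranking m) := Finset.univ.filter (fun V => K ≤ wset1 V C a) with hA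
  set A' : Finset (Ranking m) := Finset.univ.filter (fun V => K ≤ wset1 V C' a) with hA'
  have hswap1 : ∀ V : Ranking m, wset1 (V * τ) C a = wset1 V C' a := fun V =>
    wset1_swap V c c' a hac hac' D hcD hc'D
  have hswap2 : ∀ V : Ranking m, wset1 (V * τ) C' a = wset1 V C a := fun V => by
    rw [hτ, Equiv.swap_comm]
    exact wset1_swap V c' c a hac' hac D hc'D hcD
  rw [← Finset.sum_inter_add_sum_sdiff A' A (mallows1 φ W),
      ← Finset.sum_inter_add_sum_sdiff A A' (mallows1 φ W), Finset.inter_comm A A']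
  refine add_le_add (le_refl _) ?_
  have key : ∀ V ∈ A' \ A, mallows1 φ W V ≤ mallows1 φ W (V * τ) := by
    intro V hV
    rw [Finset.mem_sdiff, hA', hA, Finset.mem_filter, Finset.mem_filter] at hV
    obtain ⟨⟨-, h1⟩, h2⟩ := hV
    simp only [Finset.mem_univ, true_and, not_and, not_le] at h2
    have h2' : wset1 V C a < K := h2
    have hCe : wset1 V C a = (if V c < V a then (1:ℤ) else -1) + wset1 V D a :=
      Finset.sum_insert hcD
    have hC'e : wset1 V C' a = (if V c' < V a then (1:ℤ) else -1) + wset1 V D a :=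
      Finset.sum_insert hc'D
    have hc'a : V c' < V a := by
      by_contra hcon
      rw [hCe] at h2'; rw [hC'e, if_neg hcon] at h1
      split_ifs at h2' <;> omega
    have hca : V a < V c := by
      have hne : V a ≠ V c := fun h => hac (V.injective h)
      rcases lt_or_gt_of_ne hne with h | h
      · exact h
      · exfalso
        rw [hCe, if_pos h] at h2'; rw [hC'e, if_pos hc'a] at h1; omega
    exact mallows1_mono φ hφ0 hφ1 W V (V * τ)
      (KT_swap_le V W c c' (hc'a.trans hca) hW)
  calc ∑ V ∈ A' \ A, mallows1 φ W V
      ≤ ∑ V ∈ A' \ A, mallows1 φ W (V * τ) := Finset.sum_le_sum key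
    _ = ∑ V ∈ (A' \ A).image (· * τ), mallows1 φ W V := by
        rw [Finset.sum_image]
        intro x _ y _ h
        exact mul_right_cancel h
    _ ≤ ∑ V ∈ A \ A', mallows1 φ W V := by
        refine Finset.sum_le_sum_of_subset_of_nonneg ?_
          (fun V _ _ => mallows1_nonneg φ hφ0 W V)
        intro V hVmem
        rw [Finset.mem_image] at hVmem
        obtain ⟨U, hU, rfl⟩ := hVmem
        rw [Finset.mem_sdiff, hA', hA, Finset.mem_filter, Finset.mem_filter] at hU
        obtain ⟨⟨-, h1⟩, h2⟩ := hU
        simp only [Finset.mem_univ, true_and, not_and, not_le] at h2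
        have h2' : wset1 U C a < K := h2
        rw [Finset.mem_sdiff, hA, hA', Finset.mem_filter, Finset.mem_filter]
        refine ⟨⟨Finset.mem_univ _, ?_⟩, ?_⟩
        · rw [hswap1 U]; exact h1
        · simp only [Finset.mem_univ, true_and, not_le]
          rw [hswap2 U]; exact h2'

/-- Restricting a bijection between two finsets (as sets) by removing one matched pair. -/
def eraseEquiv {α β : Type*} [DecidableEq α] [DecidableEq β] {s : Finset α} {t : Finset β}
    (F : (s : Set α) ≃ (t : Set β)) (c : α) (hc : c ∈ (s : Set α)) :
    ((s.erase c : Finset α) : Set α) ≃ ((t.erase (F ⟨c, hc⟩).1 : Finset β) : Set β) where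
  toFun x :=
    have hx : x.1 ∈ (s : Set α) :=
      Finset.mem_coe.2 (Finset.mem_of_mem_erase (Finset.mem_coe.1 x.2))
    ⟨(F ⟨x.1, hx⟩).1, by
      refine Finset.mem_coe.2 (Finset.mem_erase.2 ⟨?_, Finset.mem_coe.1 (F _).2⟩)
      intro h
      have h2 := F.injective (Subtype.ext h)
      exact (Finset.mem_erase.1 (Finset.mem_coe.1 x.2)).1 (congrArg Subtype.val h2)⟩
  invFun y :=
    have hy : y.1 ∈ (t : Set β) :=
      Finset.mem_coe.2 (Finset.mem_of_mem_erase (Finset.mem_coe.1 y.2))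
    ⟨(F.symm ⟨y.1, hy⟩).1, by
      refine Finset.mem_coe.2 (Finset.mem_erase.2 ⟨?_, Finset.mem_coe.1 (F.symm _).2⟩)
      intro h
      have h2 : F.symm ⟨y.1, hy⟩ = ⟨c, hc⟩ := Subtype.ext h
      have h3 : (⟨y.1, hy⟩ : (t : Set β)) = F ⟨c, hc⟩ :=
        (F.apply_symm_apply ⟨y.1, hy⟩).symm.trans (congrArg F h2)
      exact (Finset.mem_erase.1 (Finset.mem_coe.1 y.2)).1 (congrArg Subtype.val h3)⟩
  left_inv x := by
    apply Subtype.ext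
    show (F.symm ⟨(F _).1, _⟩).1 = x.1
    rw [show (⟨(F _).1, _⟩ : (t : Set β)) = F ⟨x.1, _⟩ from rfl, Equiv.symm_apply_apply]
  right_inv y := by
    apply Subtype.ext
    show (F ⟨(F.symm _).1, _⟩).1 = y.1
    rw [show (⟨(F.symm _).1, _⟩ : (s : Set α)) = F.symm ⟨y.1, _⟩ from rfl,
      Equiv.apply_symm_apply]

lemma eraseEquiv_val {α β : Type*} [DecidableEq α] [DecidableEq β] {s : Finset α}
    {t : Finset β} (F : (s : Set α) ≃ (t : Set β)) (c : α) (hc : c ∈ (s : Set α))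
    (x : ((s.erase c : Finset α) : Set α)) :
    (eraseEquiv F c hc x).1 =
      (F ⟨x.1, Finset.mem_coe.2 (Finset.mem_of_mem_erase (Finset.mem_coe.1 x.2))⟩).1 := rfl

lemma main_aux {m : ℕ} (φ : ℝ) (hφ0 : 0 < φ) (hφ1 : φ < 1) (K : ℤ) (a : Fin m)
    (W : Ranking m) :
    ∀ n (C C' : Finset (Fin m)), (C \ C').card = n → a ∉ C → a ∉ C' → C.card = C'.card →
    (∃ F : ((C \ C' : Finset (Fin m)) : Set (Fin m)) ≃
        ((C' \ C : Finset (Fin m)) : Set (Fin m)), ∀ c, W c.1 < W (F c).1) →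
    ∑ V ∈ Finset.univ.filter (fun V : Ranking m => K ≤ wset1 V C' a), mallows1 φ W V ≤
      ∑ V ∈ Finset.univ.filter (fun V : Ranking m => K ≤ wset1 V C a), mallows1 φ W V := by
  intro n
  induction n with
  | zero =>
    intro C C' hn _ _ hcard _
    have h0 : C \ C' = ∅ := Finset.card_eq_zero.1 hn
    have hsub : C ⊆ C' := Finset.sdiff_eq_empty_iff_subset.1 h0
    have heq : C = C' := Finset.eq_of_subset_of_card_le hsub (le_of_eq hcard.symm)
    rw [heq]
  | succ n ih =>
    intro C C' hn haC haC' hcard hF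
    obtain ⟨F, hFp⟩ := hF
    have hne : (C \ C').Nonempty := Finset.card_pos.1 (by rw [hn]; exact n.succ_pos)
    obtain ⟨c, hc⟩ := hne
    have hcs : c ∈ ((C \ C' : Finset (Fin m)) : Set (Fin m)) := Finset.mem_coe.2 hc
    set c' := (F ⟨c, hcs⟩).1 with hc'def
    have hc'mem : c' ∈ C' \ C := Finset.mem_coe.1 (F ⟨c, hcs⟩).2
    have hcC : c ∈ C := (Finset.mem_sdiff.1 hc).1
    have hcC' : c ∉ C' := (Finset.mem_sdiff.1 hc).2
    have hc'C' : c' ∈ C' := (Finset.mem_sdiff.1 hc'mem).1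
    have hc'C : c' ∉ C := (Finset.mem_sdiff.1 hc'mem).2
    have hWcc' : W c < W c' := hFp ⟨c, hcs⟩
    have hac : a ≠ c := fun h => haC (h ▸ hcC)
    have hac' : a ≠ c' := fun h => haC' (h ▸ hc'C')
    set D := C.erase c with hD
    have hcD : c ∉ D := Finset.notMem_erase c C
    have hc'D : c' ∉ D := fun h => hc'C (Finset.mem_of_mem_erase h)
    have haD : a ∉ D := fun h => haC (Finset.mem_of_mem_erase h)
    have hCins : C = insert c D := (Finset.insert_erase hcC).symm
    have hstep := step_lemma φ hφ0 hφ1 K a W c c' hWcc' hac hac' D hcD hc'D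
    rw [← hCins] at hstep
    refine le_trans ?_ hstep
    set C₁ : Finset (Fin m) := insert c' D with hC₁
    have haC₁ : a ∉ C₁ := fun h => by
      rcases Finset.mem_insert.1 h with h | h
      exacts [hac' h, haD h]
    have hsd : C₁ \ C' = (C \ C').erase c := by
      ext x
      simp only [hC₁, hD, Finset.mem_sdiff, Finset.mem_insert, Finset.mem_erase]
      constructor
      · rintro ⟨h1 | ⟨hxc, hxC⟩, h2⟩
        · exact absurd hc'C' (h1 ▸ h2)
        · exact ⟨hxc, hxC, h2⟩
      · rintro ⟨hxc, hxC, h2⟩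
        exact ⟨Or.inr ⟨hxc, hxC⟩, h2⟩
    have hsd' : C' \ C₁ = (C' \ C).erase c' := by
      ext x
      simp only [hC₁, hD, Finset.mem_sdiff, Finset.mem_insert, Finset.mem_erase]
      constructor
      · rintro ⟨h1, h2⟩
        push_neg at h2
        obtain ⟨h2a, h2b⟩ := h2
        have hxc : x ≠ c := fun h => hcC' (h ▸ h1)
        exact ⟨h2a, h1, h2b hxc⟩
      · rintro ⟨h1, h2, h3⟩
        refine ⟨h2, ?_⟩
        push_neg
        exact ⟨h1, fun _ => h3⟩
    have hcard1 : C₁.card = C'.card := by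
      have hpos : 0 < C.card := Finset.card_pos.2 ⟨c, hcC⟩
      rw [hC₁, Finset.card_insert_of_notMem hc'D, hD, Finset.card_erase_of_mem hcC]
      omega
    have hn1 : (C₁ \ C').card = n := by
      rw [hsd, Finset.card_erase_of_mem hc, hn]
      omega
    apply ih C₁ C' hn1 haC₁ haC' hcard1
    rw [hsd, hsd', hc'def]
    refine ⟨eraseEquiv F c hcs, fun z => ?_⟩
    rw [eraseEquiv_val F c hcs z]
    exact hFp ⟨z.1, Finset.mem_coe.2 (Finset.mem_of_mem_erase (Finset.mem_coe.1 z.2))⟩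

end Aux

/-- **Lemma about Mallows' model.** If `C` dominates `C'` w.r.t. `W`, then
`π_W({V : w_V(C'≻a) ≥ K}) ≤ π_W({V : w_V(C≻a) ≥ K})`. -/
theorem stmt1 (m : ℕ) (φ : ℝ) (hφ0 : 0 < φ) (hφ1 : φ < 1) (K : ℤ)
    (a : Fin m) (W : Ranking m) (C C' : Finset (Fin m))
    (haC : a ∉ C) (haC' : a ∉ C') (hcard : C.card = C'.card)
    (hdom : Dominates W C C') :
    ∑ V ∈ Finset.univ.filter (fun V : Ranking m => K ≤ wset1 V C' a), mallows1 φ W V ≤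
      ∑ V ∈ Finset.univ.filter (fun V : Ranking m => K ≤ wset1 V C a), mallows1 φ W V := by
  rcases hdom with heq | hF
  · rw [heq]
  · exact main_aux φ hφ0 hφ1 K a W (C \ C').card C C' rfl haC haC' hcard hF


end Voting
end

section
/- Under Mallows' model with m ≥ 2 alternatives and n i.i.d. samples, for any alternative a and any 0<α<1, there exist K ∈ ℝ and Γ ∈ [0,1] such that the test f defined on profiles P ∈ ℒ(𝒜)^n by f(P)=1 if w_P(a≻others)>K, f(P)=0 if w_P(a≻others)<K, and f(P)=Γ if w_P(a≻others)=K, has Size(f)=α over H₀ = L_{others≻a} and is a level-α UMP test for H₀ = L_{others≻a} vs H₁ = L_{a≻others}. -/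
namespace Voting

open Finset

section Generic

variable {S Θ : Type*} [Fintype S] [Fintype Θ]

/-- `Size π f θ` : the probability that test `f` rejects when the ground truth is `θ`. -/
noncomputable def Size (π : Θ → S → ℝ) (f : S → ℝ) (θ : Θ) : ℝ :=
  ∑ P, π θ P * f P

/-- `Power π f θ` : the power of test `f` at parameter `θ`. -/
noncomputable def Power (π : Θ → S → ℝ) (f : S → ℝ) (θ : Θ) : ℝ :=
  ∑ P, π θ P * f P

/-- A (randomized) test is a critical function with values in `[0,1]`. -/
def IsTest (f : S → ℝ) : Prop := ∀ P, 0 ≤ f P ∧ f P ≤ 1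

/-- `Size(f) ≤ α` over the null hypothesis `H0`. -/
def SizeLe (π : Θ → S → ℝ) (H0 : Set Θ) (f : S → ℝ) (α : ℝ) : Prop :=
  ∀ h0 ∈ H0, Size π f h0 ≤ α

/-- `Size(f) = α` over the null hypothesis `H0` (the max over `H0` equals `α`). -/
def SizeEq (π : Θ → S → ℝ) (H0 : Set Θ) (f : S → ℝ) (α : ℝ) : Prop :=
  SizeLe π H0 f α ∧ ∃ h0 ∈ H0, Size π f h0 = α

/-- `f` is a level-`α` most powerful test for `H0` vs the simple alternative `h1`. -/
def IsMostPowerful (π : Θ → S → ℝ) (H0 : Set Θ) (h1 : Θ) (α : ℝ) (f : S → ℝ) : Prop :=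
  IsTest f ∧ SizeLe π H0 f α ∧
    ∀ g : S → ℝ, IsTest g → SizeLe π H0 g α → Power π g h1 ≤ Power π f h1

/-- `f` is a level-`α` uniformly most powerful test for `H0` vs `H1`. -/
def IsUMP (π : Θ → S → ℝ) (H0 H1 : Set Θ) (α : ℝ) (f : S → ℝ) : Prop :=
  ∀ h1 ∈ H1, IsMostPowerful π H0 h1 α f

end Generic

/-- `w_P(a≻others) = Σ_{b≠a} w_P(a≻b)`. -/
def wOthers {m n : ℕ} (P : Fin n → Ranking m) (a : Fin m) : ℤ :=
  ∑ b ∈ Finset.univ.erase a, wpair P a b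

/-- The threshold test on the statistic `w_P(a≻others)`. -/
noncomputable def aTest {m : ℕ} (n : ℕ) (a : Fin m) (K Γ : ℝ) :
    (Fin n → Ranking m) → ℝ :=
  fun P =>
    if K < ((wOthers P a : ℤ) : ℝ) then 1
    else if ((wOthers P a : ℤ) : ℝ) < K then 0
    else Γ

section AuxLemmas
open Finset
variable {m n k : ℕ}

lemma KT_mul (V W σ : Ranking m) : KT (V * σ) (W * σ) = KT V W := by
  unfold KT
  refine Finset.card_bij' (fun p _ => (σ p.1, σ p.2)) (fun p _ => (σ⁻¹ p.1, σ⁻¹ p.2)) ?_ ?_ ?_ ?_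
  · intro p hp
    rw [mem_filter] at hp ⊢
    simp only [mem_filter, mem_univ, true_and, Equiv.Perm.mul_apply] at hp ⊢
    exact hp
  · intro p hp
    rw [mem_filter] at hp ⊢
    simp only [mem_filter, mem_univ, true_and, Equiv.Perm.mul_apply] at hp ⊢
    simpa using hp
  · intro p hp
    simp
  · intro p hp
    simp

lemma Z_eq (φ : ℝ) (W : Ranking m) :
    ∑ U : Ranking m, φ ^ KT U W = ∑ U : Ranking m, φ ^ KT U 1 := by
  rw [← Equiv.sum_comp (Equiv.mulRight W) (fun U : Ranking m => φ ^ KT U W)]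
  refine Finset.sum_congr rfl fun U _ => ?_
  have h : KT (U * W) (1 * W) = KT U 1 := KT_mul U 1 W
  rw [one_mul] at h
  simp only [Equiv.coe_mulRight]
  rw [h]

lemma Z_pos {φ : ℝ} (hφ : 0 < φ) (W : Ranking m) : 0 < ∑ U : Ranking m, φ ^ KT U W :=
  Finset.sum_pos (fun U _ => pow_pos hφ _) Finset.univ_nonempty

lemma mallows1_pos {φ : ℝ} (hφ : 0 < φ) (W V : Ranking m) : 0 < mallows1 φ W V :=
  div_pos (pow_pos hφ _) (Z_pos hφ W)

lemma sum_mallows1 {φ : ℝ} (hφ : 0 < φ) (W : Ranking m) :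
    ∑ V : Ranking m, mallows1 φ W V = 1 := by
  unfold mallows1
  rw [← Finset.sum_div]
  exact div_self (Z_pos hφ W).ne'

lemma mallows1_mul (φ : ℝ) (W V σ : Ranking m) : mallows1 φ (W * σ) (V * σ) = mallows1 φ W V := by
  unfold mallows1
  rw [KT_mul, Z_eq φ (W * σ), Z_eq φ W]

lemma mallows_pos {φ : ℝ} (hφ : 0 < φ) (W : Ranking m) (P : Fin n → Ranking m) :
    0 < mallows φ n W P :=
  Finset.prod_pos fun i _ => mallows1_pos hφ W (P i)

lemma sum_mallows {φ : ℝ} (hφ : 0 < φ) (W : Ranking m) :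
    ∑ P : Fin n → Ranking m, mallows φ n W P = 1 := by
  unfold mallows
  rw [← Fintype.piFinset_univ, ← Finset.prod_univ_sum]
  simp [sum_mallows1 hφ W]

lemma mallows_eq_pow {φ : ℝ} (W : Ranking m) (P : Fin n → Ranking m) :
    mallows φ n W P = φ ^ (∑ i, KT (P i) W) / (∑ U : Ranking m, φ ^ KT U 1) ^ n := by
  unfold mallows mallows1
  rw [Finset.prod_div_distrib, Finset.prod_pow_eq_pow_sum]
  congr 1
  rw [Finset.prod_congr rfl fun i _ => Z_eq φ W, Finset.prod_const, Finset.card_univ,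
    Fintype.card_fin]

lemma Lbot_apply (a : Fin (k+2)) {W : Ranking (k+2)} (hW : W ∈ Lbot a) :
    W a = Fin.last (k+1) := by
  by_contra h
  have hb : W (W.symm (Fin.last (k+1))) = Fin.last (k+1) := W.apply_symm_apply _
  have hne : W.symm (Fin.last (k+1)) ≠ a := fun h' => h (h' ▸ hb)
  have hlt := hW _ hne
  rw [hb] at hlt
  exact absurd hlt (not_lt.mpr (Fin.le_last _))

lemma Ltop_apply (a : Fin (k+2)) {W : Ranking (k+2)} (hW : W ∈ Ltop a) : W a = 0 := by
  by_contra h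
  have hb : W (W.symm 0) = 0 := W.apply_symm_apply _
  have hne : W.symm 0 ≠ a := fun h' => h (h' ▸ hb)
  have hlt := hW _ hne
  rw [hb] at hlt
  exact absurd hlt (by simp)

lemma companion_apply_ne {a : Fin (k+2)} {W0 : Ranking (k+2)} (hW0 : W0 ∈ Lbot a)
    {b : Fin (k+2)} (hb : b ≠ a) :
    ((finRotate (k+2) * W0) b).val = (W0 b).val + 1 := by
  have h1 : W0 b < Fin.last (k+1) := Lbot_apply a hW0 ▸ hW0 b hb
  simp only [Equiv.Perm.mul_apply, finRotate_succ_apply]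
  exact Fin.val_add_one_of_lt h1

lemma companion_apply_a {a : Fin (k+2)} {W0 : Ranking (k+2)} (hW0 : W0 ∈ Lbot a) :
    (finRotate (k+2) * W0) a = 0 := by
  simp only [Equiv.Perm.mul_apply, Lbot_apply a hW0]
  exact finRotate_last

lemma companion_mem_Ltop {a : Fin (k+2)} {W0 : Ranking (k+2)} (hW0 : W0 ∈ Lbot a) :
    (finRotate (k+2) * W0) ∈ Ltop a := by
  intro b hb
  rw [companion_apply_a hW0, Fin.lt_def, companion_apply_ne hW0 hb]
  simp

lemma inv_companion_mem_Lbot {a : Fin (k+2)} {W1 : Ranking (k+2)} (hW1 : W1 ∈ Ltop a) :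
    ((finRotate (k+2))⁻¹ * W1) ∈ Lbot a := by
  have hinv : (finRotate (k+2))⁻¹ (0 : Fin (k+2)) = Fin.last (k+1) := by
    have h : (finRotate (k+2))⁻¹ (finRotate (k+2) (Fin.last (k+1))) = Fin.last (k+1) :=
      Equiv.symm_apply_apply (finRotate (k+2)) (Fin.last (k+1))
    rwa [finRotate_last] at h
  intro b hb
  have ha : ((finRotate (k+2))⁻¹ * W1) a = Fin.last (k+1) := by
    rw [Equiv.Perm.mul_apply, Ltop_apply a hW1, hinv]
  rw [ha]
  refine lt_of_le_of_ne (Fin.le_last _) fun hcon => ?_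
  rw [Equiv.Perm.mul_apply, ← hinv] at hcon
  have : W1 b = 0 := (finRotate (k+2))⁻¹.injective hcon
  rw [← Ltop_apply a hW1] at this
  exact hb (W1.injective this)

lemma KT_companion (a : Fin (k+2)) {W0 : Ranking (k+2)} (hW0 : W0 ∈ Lbot a)
    (V : Ranking (k+2)) :
    KT V (finRotate (k+2) * W0) + (univ.filter fun b => V a < V b).card
      = KT V W0 + (univ.filter fun b => V b < V a).card := by
  set W1 := finRotate (k+2) * W0 with hW1def
  have hW1a : W1 a = 0 := companion_apply_a hW0
  have hW1ne : ∀ b : Fin (k+2), b ≠ a → (W1 b).val = (W0 b).val + 1 :=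
    fun b hb => companion_apply_ne hW0 hb
  have hW0a : W0 a = Fin.last (k+1) := Lbot_apply a hW0
  have hW0lt : ∀ b : Fin (k+2), b ≠ a → W0 b < W0 a := fun b hb => hW0 b hb
  -- split KT V W1 according to whether p.2 = a
  have split1 := Finset.card_filter_add_card_filter_not
    (s := univ.filter fun p : Fin (k+2) × Fin (k+2) => V p.1 < V p.2 ∧ W1 p.2 < W1 p.1)
    (p := fun p => p.2 = a)
  have split0 := Finset.card_filter_add_card_filter_not
    (s := univ.filter fun p : Fin (k+2) × Fin (k+2) => V p.1 < V p.2 ∧ W0 p.2 < W0 p.1)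
    (p := fun p => p.1 = a)
  have cardA : ((univ.filter fun p : Fin (k+2) × Fin (k+2) =>
        V p.1 < V p.2 ∧ W1 p.2 < W1 p.1).filter fun p => p.2 = a).card
      = (univ.filter fun b => V b < V a).card := by
    refine Finset.card_bij' (fun p _ => p.1) (fun b _ => (b, a)) ?_ ?_ ?_ ?_
    · intro p hp
      simp only [mem_filter, mem_univ, true_and] at hp ⊢
      obtain ⟨⟨h1, _⟩, h3⟩ := hp
      rw [h3] at h1; exact h1
    · intro b hb
      simp only [mem_filter, mem_univ, true_and] at hb ⊢
      have hba : b ≠ a := fun h => absurd hb (by rw [h]; exact lt_irrefl _)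
      refine ⟨⟨hb, ?_⟩, trivial⟩
      rw [hW1a, Fin.lt_def, hW1ne b hba]
      simp
    · intro p hp
      simp only [mem_filter, mem_univ, true_and] at hp
      exact Prod.ext rfl hp.2.symm
    · intro b _; rfl
  have cardB : ((univ.filter fun p : Fin (k+2) × Fin (k+2) =>
        V p.1 < V p.2 ∧ W0 p.2 < W0 p.1).filter fun p => p.1 = a).card
      = (univ.filter fun b => V a < V b).card := by
    refine Finset.card_bij' (fun p _ => p.2) (fun b _ => (a, b)) ?_ ?_ ?_ ?_
    · intro p hp
      simp only [mem_filter, mem_univ, true_and] at hp ⊢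
      obtain ⟨⟨h1, _⟩, h3⟩ := hp
      rw [h3] at h1; exact h1
    · intro b hb
      simp only [mem_filter, mem_univ, true_and] at hb ⊢
      have hba : b ≠ a := fun h => absurd hb (by rw [h]; exact lt_irrefl _)
      exact ⟨⟨hb, hW0lt b hba⟩, trivial⟩
    · intro p hp
      simp only [mem_filter, mem_univ, true_and] at hp
      exact Prod.ext hp.2.symm rfl
    · intro b _; rfl
  have eX : ((univ.filter fun p : Fin (k+2) × Fin (k+2) =>
        V p.1 < V p.2 ∧ W1 p.2 < W1 p.1).filter fun p => ¬ p.2 = a)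
      = ((univ.filter fun p : Fin (k+2) × Fin (k+2) =>
        V p.1 < V p.2 ∧ W0 p.2 < W0 p.1).filter fun p => ¬ p.1 = a) := by
    ext p
    simp only [mem_filter, mem_univ, true_and]
    constructor
    · rintro ⟨⟨h1, h2⟩, h3⟩
      have hp1 : ¬ p.1 = a := by
        intro h
        rw [h, hW1a] at h2
        exact absurd h2 (by simp)
      have e2 := hW1ne p.2 h3
      have e1 := hW1ne p.1 hp1
      rw [Fin.lt_def] at h2
      rw [e1, e2] at h2
      exact ⟨⟨h1, Fin.lt_def.mpr (by omega)⟩, hp1⟩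
    · rintro ⟨⟨h1, h2⟩, h3⟩
      have hp2 : ¬ p.2 = a := by
        intro h
        rw [h, hW0a] at h2
        exact absurd h2 (not_lt.mpr (Fin.le_last _))
      have e2 := hW1ne p.2 hp2
      have e1 := hW1ne p.1 h3
      rw [Fin.lt_def] at h2
      exact ⟨⟨h1, by rw [Fin.lt_def, e1, e2]; omega⟩, hp2⟩
  have hKT1 : KT V W1 = (univ.filter fun p : Fin (k+2) × Fin (k+2) =>
      V p.1 < V p.2 ∧ W1 p.2 < W1 p.1).card := rfl
  have hKT0 : KT V W0 = (univ.filter fun p : Fin (k+2) × Fin (k+2) =>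
      V p.1 < V p.2 ∧ W0 p.2 < W0 p.1).card := rfl
  rw [eX] at split1
  omega

lemma wOthers_eq (a : Fin m) (P : Fin n → Ranking m) :
    wOthers P a = ∑ i, (((univ.filter fun b => P i a < P i b).card : ℤ)
      - ((univ.filter fun b => P i b < P i a).card : ℤ)) := by
  unfold wOthers wpair
  have step1 : ∀ b : Fin m,
      (((univ.filter fun i => P i a < P i b).card : ℤ)
        - ((univ.filter fun i => P i b < P i a).card : ℤ))
      = ∑ i, ((if P i a < P i b then (1:ℤ) else 0) - (if P i b < P i a then (1:ℤ) else 0)) := by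
    intro b
    rw [Finset.sum_sub_distrib, Finset.card_filter, Finset.card_filter]
    push_cast
    rfl
  rw [Finset.sum_congr rfl fun b _ => step1 b, Finset.sum_comm]
  refine Finset.sum_congr rfl fun i _ => ?_
  rw [Finset.sum_sub_distrib, Finset.card_filter, Finset.card_filter]
  push_cast
  rw [← Finset.sum_sub_distrib, ← Finset.sum_sub_distrib]
  exact Finset.sum_erase (f := fun b => (if (P i) a < (P i) b then (1:ℤ) else 0)
    - if (P i) b < (P i) a then (1:ℤ) else 0) univ (sub_self _)

lemma exponent_eq {a : Fin (k+2)} {W0 : Ranking (k+2)} (hW0 : W0 ∈ Lbot a)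
    (P : Fin n → Ranking (k+2)) :
    ((∑ i, KT (P i) (finRotate (k+2) * W0) : ℕ) : ℤ)
      = ((∑ i, KT (P i) W0 : ℕ) : ℤ) - wOthers P a := by
  have key : ∀ i, ((KT (P i) (finRotate (k+2) * W0) : ℤ))
      = (KT (P i) W0 : ℤ) + ((univ.filter fun b => P i b < P i a).card : ℤ)
        - ((univ.filter fun b => P i a < P i b).card : ℤ) := by
    intro i
    have h := KT_companion a hW0 (P i)
    omega
  push_cast
  rw [Finset.sum_congr rfl fun i _ => key i, wOthers_eq a P]
  rw [Finset.sum_sub_distrib, Finset.sum_add_distrib, Finset.sum_sub_distrib]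
  ring

lemma wOthers_relabel (a : Fin m) (σ : Ranking m) (hσ : σ a = a) (P : Fin n → Ranking m) :
    wOthers (fun i => P i * σ) a = wOthers P a := by
  unfold wOthers wpair
  simp only [Equiv.Perm.mul_apply, hσ]
  refine Finset.sum_bij' (fun b _ => σ b) (fun b _ => σ⁻¹ b) ?_ ?_ ?_ ?_ ?_
  · intro b hb
    simp only [mem_erase, mem_univ, and_true] at hb ⊢
    intro h
    exact hb (σ.injective (by rw [h, hσ]))
  · intro b hb
    simp only [mem_erase, mem_univ, and_true] at hb ⊢
    intro h
    apply hb
    have h2 := congrArg σ h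
    rw [show σ (σ⁻¹ b) = b from Equiv.apply_symm_apply σ b] at h2
    rw [h2, hσ]
  · intro b _; simp
  · intro b _; simp
  · intro b _; rfl

lemma mallows_companion {φ : ℝ} (hφ : 0 < φ) {a : Fin (k+2)} {W0 : Ranking (k+2)}
    (hW0 : W0 ∈ Lbot a) (n : ℕ) (P : Fin n → Ranking (k+2)) :
    mallows φ n (finRotate (k+2) * W0) P = φ ^ (-(wOthers P a)) * mallows φ n W0 P := by
  rw [mallows_eq_pow, mallows_eq_pow]
  rw [← zpow_natCast φ (∑ i, KT (P i) (finRotate (k+2) * W0)),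
    ← zpow_natCast φ (∑ i, KT (P i) W0), exponent_eq hW0 P, sub_eq_add_neg,
    zpow_add₀ hφ.ne']
  ring

lemma aTest_eq_one {K0 : ℤ} {Γ : ℝ} {a : Fin m} {P : Fin n → Ranking m}
    (h : K0 < wOthers P a) : aTest n a (K0 : ℝ) Γ P = 1 := by
  unfold aTest
  rw [if_pos (by exact_mod_cast h)]

lemma aTest_eq_zero {K0 : ℤ} {Γ : ℝ} {a : Fin m} {P : Fin n → Ranking m}
    (h : wOthers P a < K0) : aTest n a (K0 : ℝ) Γ P = 0 := by
  unfold aTest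
  rw [if_neg (by exact_mod_cast not_lt.mpr h.le), if_pos (by exact_mod_cast h)]

lemma aTest_eq_gamma {K0 : ℤ} {Γ : ℝ} {a : Fin m} {P : Fin n → Ranking m}
    (h : wOthers P a = K0) : aTest n a (K0 : ℝ) Γ P = Γ := by
  unfold aTest
  rw [if_neg (by exact_mod_cast not_lt.mpr h.le), if_neg (by exact_mod_cast not_lt.mpr h.ge)]

lemma size_aTest_eq (φ : ℝ) (n : ℕ) (a : Fin m) (K0 : ℤ) (Γ : ℝ) (W : Ranking m) :
    Size (mallows φ n) (aTest n a (K0 : ℝ) Γ) W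
      = (∑ P ∈ univ.filter fun P : Fin n → Ranking m => K0 < wOthers P a, mallows φ n W P)
        + Γ * ∑ P ∈ univ.filter fun P : Fin n → Ranking m => wOthers P a = K0,
            mallows φ n W P := by
  unfold Size
  rw [← Finset.sum_filter_add_sum_filter_not univ
    (fun P : Fin n → Ranking m => K0 < wOthers P a)]
  congr 1
  · refine Finset.sum_congr rfl fun P hP => ?_
    rw [Finset.mem_filter] at hP
    rw [aTest_eq_one hP.2, mul_one]
  · rw [← Finset.sum_filter_add_sum_filter_not
      (univ.filter fun P : Fin n → Ranking m => ¬ K0 < wOthers P a)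
      (fun P => wOthers P a = K0), Finset.filter_filter]
    have h0 : ∑ P ∈ (univ.filter fun P : Fin n → Ranking m => ¬ K0 < wOthers P a).filter
        (fun P => ¬ wOthers P a = K0), mallows φ n W P * aTest n a (K0 : ℝ) Γ P = 0 := by
      refine Finset.sum_eq_zero fun P hP => ?_
      simp only [Finset.mem_filter] at hP
      rw [aTest_eq_zero (by omega), mul_zero]
    rw [h0, add_zero]
    have hset : (univ.filter fun P : Fin n → Ranking m =>
        ¬ K0 < wOthers P a ∧ wOthers P a = K0)
        = univ.filter fun P : Fin n → Ranking m => wOthers P a = K0 := by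
      refine Finset.filter_congr fun P _ => ?_
      constructor
      · exact fun h => h.2
      · exact fun h => ⟨by omega, h⟩
    rw [hset, Finset.mul_sum]
    refine Finset.sum_congr rfl fun P hP => ?_
    rw [Finset.mem_filter] at hP
    rw [aTest_eq_gamma hP.2]
    ring

lemma size_aTest_const (φ : ℝ) (n : ℕ) (a : Fin (k+2)) (K Γ : ℝ)
    {W W' : Ranking (k+2)} (hW : W ∈ Lbot a) (hW' : W' ∈ Lbot a) :
    Size (mallows φ n) (aTest n a K Γ) W = Size (mallows φ n) (aTest n a K Γ) W' := by
  set σ : Ranking (k+2) := W⁻¹ * W' with hσdef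
  have hWσ : W * σ = W' := by rw [hσdef, mul_inv_cancel_left]
  have hσa : σ a = a := by
    have h1 : W a = W' a := (Lbot_apply a hW).trans (Lbot_apply a hW').symm
    rw [hσdef]
    simp only [Equiv.Perm.mul_apply, ← h1]
    exact Equiv.symm_apply_apply W a
  let e : (Fin n → Ranking (k+2)) ≃ (Fin n → Ranking (k+2)) :=
    { toFun := fun P i => P i * σ
      invFun := fun P i => P i * σ⁻¹
      left_inv := fun P => funext fun i => by simp [mul_assoc]
      right_inv := fun P => funext fun i => by simp [mul_assoc] }
  unfold Size
  refine Fintype.sum_equiv e _ _ fun P => ?_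
  have h2 : mallows φ n W' (e P) = mallows φ n W P := by
    unfold mallows
    refine Finset.prod_congr rfl fun i _ => ?_
    show mallows1 φ W' (P i * σ) = mallows1 φ W (P i)
    rw [← hWσ]
    exact mallows1_mul φ W (P i) σ
  have h3 : aTest n a K Γ (e P) = aTest n a K Γ P := by
    have hw : wOthers (e P) a = wOthers P a := wOthers_relabel a σ hσa P
    unfold aTest
    rw [hw]
  rw [h2, h3]

end AuxLemmas

/-- **A UMP winner test under Mallows.** For any `a` and `0<α<1` there exist
`K` and `Γ ∈ [0,1]` such that the threshold test on `w_P(a≻others)` has size exactly `α`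
over `H₀ = L_{others≻a}` and is a level-`α` UMP test for `H₀ = L_{others≻a}` vs
`H₁ = L_{a≻others}`. -/
theorem stmt3 (m n : ℕ) (hm : 2 ≤ m) (φ : ℝ) (hφ0 : 0 < φ) (hφ1 : φ < 1)
    (α : ℝ) (hα0 : 0 < α) (hα1 : α < 1) (a : Fin m) :
    ∃ K Γ : ℝ, 0 ≤ Γ ∧ Γ ≤ 1 ∧
      SizeEq (mallows φ n) (Lbot a) (aTest n a K Γ) α ∧
      IsUMP (mallows φ n) (Lbot a) (Ltop a) α (aTest n a K Γ) := by
  obtain ⟨k, rfl⟩ : ∃ k, m = k + 2 := ⟨m - 2, by omega⟩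
  clear hm
  -- a base null parameter
  set Wb : Ranking (k+2) := Equiv.swap a (Fin.last (k+1)) with hWbdef
  have hWb : Wb ∈ Lbot a := by
    intro b hb
    have hWba : Wb a = Fin.last (k+1) := Equiv.swap_apply_left a _
    rw [hWba]
    refine lt_of_le_of_ne (Fin.le_last _) fun hcon => ?_
    rw [← hWba] at hcon
    exact hb (Wb.injective hcon)
  set Hi : ℤ → ℝ := fun t =>
    ∑ P ∈ univ.filter fun P : Fin n → Ranking (k+2) => t < wOthers P a,
      mallows φ n Wb P with hHidef
  set Es : ℤ → ℝ := fun t =>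
    ∑ P ∈ univ.filter fun P : Fin n → Ranking (k+2) => wOthers P a = t,
      mallows φ n Wb P with hEsdef
  have hprofile_ne : (univ : Finset (Fin n → Ranking (k+2))).Nonempty := univ_nonempty
  set 𝒱 : Finset ℤ := univ.image (fun P : Fin n → Ranking (k+2) => wOthers P a) with h𝒱def
  have h𝒱ne : 𝒱.Nonempty := hprofile_ne.image _
  have hgoodne : (𝒱.filter fun t => Hi t ≤ α).Nonempty := by
    refine ⟨𝒱.max' h𝒱ne, mem_filter.mpr ⟨𝒱.max'_mem h𝒱ne, ?_⟩⟩
    have hemp : (univ.filter fun P : Fin n → Ranking (k+2) =>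
        𝒱.max' h𝒱ne < wOthers P a) = ∅ := by
      refine Finset.filter_eq_empty_iff.mpr fun P _ => ?_
      exact not_lt.mpr (𝒱.le_max' (wOthers P a) (mem_image_of_mem _ (mem_univ P)))
    simp only [hHidef]
    rw [hemp, Finset.sum_empty]
    exact hα0.le
  set K0 : ℤ := (𝒱.filter fun t => Hi t ≤ α).min' hgoodne with hK0def
  have hK0mem := (𝒱.filter fun t => Hi t ≤ α).min'_mem hgoodne
  rw [mem_filter] at hK0mem
  have hHiK0 : Hi K0 ≤ α := hK0mem.2
  have htotal : ∑ P : Fin n → Ranking (k+2), mallows φ n Wb P = 1 := sum_mallows hφ0 Wb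
  have hsplit : Hi K0 + Es K0
      = ∑ P ∈ univ.filter fun P : Fin n → Ranking (k+2) => K0 ≤ wOthers P a,
          mallows φ n Wb P := by
    rw [← Finset.sum_filter_add_sum_filter_not
      (univ.filter fun P : Fin n → Ranking (k+2) => K0 ≤ wOthers P a)
      (fun P => K0 < wOthers P a), Finset.filter_filter, Finset.filter_filter]
    simp only [hHidef, hEsdef]
    congr 1
    · congr 1
      refine Finset.filter_congr fun P _ => ?_
      constructor <;> intro h <;> omega
    · congr 1
      refine Finset.filter_congr fun P _ => ?_
      constructor <;> intro h <;> omega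
  have hGe : α < Hi K0 + Es K0 := by
    rw [hsplit]
    by_cases hlow : (𝒱.filter fun t => t < K0).Nonempty
    · set t' := (𝒱.filter fun t => t < K0).max' hlow with ht'def
      have ht'mem := (𝒱.filter fun t => t < K0).max'_mem hlow
      rw [mem_filter] at ht'mem
      have ht'notgood : ¬ Hi t' ≤ α := by
        intro hcon
        have hle : K0 ≤ t' :=
          (𝒱.filter fun t => Hi t ≤ α).min'_le t' (mem_filter.mpr ⟨ht'mem.1, hcon⟩)
        omega
      push_neg at ht'notgood
      have heq : (univ.filter fun P : Fin n → Ranking (k+2) => t' < wOthers P a)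
          = (univ.filter fun P : Fin n → Ranking (k+2) => K0 ≤ wOthers P a) := by
        refine Finset.filter_congr fun P _ => ?_
        constructor
        · intro h
          by_contra hc
          push_neg at hc
          have hTP𝒱 : wOthers P a ∈ 𝒱 := mem_image_of_mem _ (mem_univ P)
          have := (𝒱.filter fun t => t < K0).le_max' (wOthers P a)
            (mem_filter.mpr ⟨hTP𝒱, by omega⟩)
          omega
        · intro h
          have := ht'mem.2
          omega
      calc α < Hi t' := ht'notgood
        _ = _ := by simp only [hHidef]; rw [heq]
    · have hall : (univ.filter fun P : Fin n → Ranking (k+2) => K0 ≤ wOthers P a) = univ := by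
        refine Finset.filter_true_of_mem fun P _ => ?_
        by_contra hc
        push_neg at hc
        exact hlow ⟨wOthers P a, mem_filter.mpr ⟨mem_image_of_mem _ (mem_univ P), hc⟩⟩
      rw [hall, htotal]
      exact hα1
  have hEsK0 : 0 < Es K0 := by linarith
  set Γ : ℝ := (α - Hi K0) / Es K0 with hΓdef
  have hΓ0 : 0 ≤ Γ := div_nonneg (by linarith) hEsK0.le
  have hΓ1 : Γ ≤ 1 := by rw [div_le_one hEsK0]; linarith
  have hsizeWb : Size (mallows φ n) (aTest n a (K0 : ℝ) Γ) Wb = α := by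
    rw [size_aTest_eq]
    have h1 : (∑ P ∈ univ.filter fun P : Fin n → Ranking (k+2) => K0 < wOthers P a,
        mallows φ n Wb P) = Hi K0 := by simp only [hHidef]
    have h2 : (∑ P ∈ univ.filter fun P : Fin n → Ranking (k+2) => wOthers P a = K0,
        mallows φ n Wb P) = Es K0 := by simp only [hEsdef]
    rw [h1, h2, hΓdef, div_mul_cancel₀ _ hEsK0.ne']
    ring
  have hsize_all : ∀ W ∈ Lbot a, Size (mallows φ n) (aTest n a (K0 : ℝ) Γ) W = α := by
    intro W hWmem
    rw [size_aTest_const φ n a _ _ hWmem hWb, hsizeWb]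
  have hIsTest : IsTest (aTest n a (K0 : ℝ) Γ) := by
    intro P
    rcases lt_trichotomy (wOthers P a) K0 with h|h|h
    · rw [aTest_eq_zero h]; norm_num
    · rw [aTest_eq_gamma h]; exact ⟨hΓ0, hΓ1⟩
    · rw [aTest_eq_one h]; norm_num
  have hSizeLe : SizeLe (mallows φ n) (Lbot a) (aTest n a (K0 : ℝ) Γ) α :=
    fun W hWmem => le_of_eq (hsize_all W hWmem)
  refine ⟨(K0 : ℝ), Γ, hΓ0, hΓ1, ⟨hSizeLe, Wb, hWb, hsizeWb⟩, ?_⟩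
  intro h1 hh1
  refine ⟨hIsTest, hSizeLe, ?_⟩
  intro g hg hgle
  set W0 : Ranking (k+2) := (finRotate (k+2))⁻¹ * h1 with hW0def
  have hW0mem : W0 ∈ Lbot a := inv_companion_mem_Lbot hh1
  have hrW0 : finRotate (k+2) * W0 = h1 := by rw [hW0def, mul_inv_cancel_left]
  have hratio : ∀ P : Fin n → Ranking (k+2),
      mallows φ n h1 P = φ ^ (-(wOthers P a)) * mallows φ n W0 P := by
    intro P
    rw [← hrW0]
    exact mallows_companion hφ0 hW0mem n P
  set c : ℝ := φ ^ (-K0 : ℤ) with hcdef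
  have hc0 : 0 < c := zpow_pos hφ0 _
  have hpt : ∀ P : Fin n → Ranking (k+2),
      0 ≤ (aTest n a (K0 : ℝ) Γ P - g P) * (mallows φ n h1 P - c * mallows φ n W0 P) := by
    intro P
    have hgP := hg P
    have hπ0 : 0 < mallows φ n W0 P := mallows_pos hφ0 _ _
    rcases lt_trichotomy (wOthers P a) K0 with h|h|h
    · rw [aTest_eq_zero h, hratio P]
      have hlt : φ ^ (-(wOthers P a)) ≤ c := by
        rw [hcdef]
        exact zpow_le_zpow_right_of_le_one₀ hφ0 hφ1.le (by omega)
      have key : 0 ≤ (g P) * ((c - φ ^ (-(wOthers P a))) * mallows φ n W0 P) :=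
        mul_nonneg hgP.1 (mul_nonneg (sub_nonneg.mpr hlt) hπ0.le)
      nlinarith [key]
    · rw [hratio P, h, ← hcdef]
      simp
    · rw [aTest_eq_one h, hratio P]
      have hge : c ≤ φ ^ (-(wOthers P a)) := by
        rw [hcdef]
        exact zpow_le_zpow_right_of_le_one₀ hφ0 hφ1.le (by omega)
      have key : 0 ≤ (1 - g P) * ((φ ^ (-(wOthers P a)) - c) * mallows φ n W0 P) :=
        mul_nonneg (by linarith [hgP.2]) (mul_nonneg (sub_nonneg.mpr hge) hπ0.le)
      nlinarith [key]
  have hsum : (0:ℝ) ≤ ∑ P : Fin n → Ranking (k+2),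
      (aTest n a (K0 : ℝ) Γ P - g P) * (mallows φ n h1 P - c * mallows φ n W0 P) :=
    Finset.sum_nonneg fun P _ => hpt P
  have hexpand : ∑ P : Fin n → Ranking (k+2),
      (aTest n a (K0 : ℝ) Γ P - g P) * (mallows φ n h1 P - c * mallows φ n W0 P)
      = (Power (mallows φ n) (aTest n a (K0 : ℝ) Γ) h1 - Power (mallows φ n) g h1)
        - c * (Size (mallows φ n) (aTest n a (K0 : ℝ) Γ) W0 - Size (mallows φ n) g W0) := by
    unfold Power Size
    rw [mul_sub, Finset.mul_sum, Finset.mul_sum]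
    rw [← Finset.sum_sub_distrib, ← Finset.sum_sub_distrib, ← Finset.sum_sub_distrib]
    refine Finset.sum_congr rfl fun P _ => ?_
    ring
  have hSizeF : Size (mallows φ n) (aTest n a (K0 : ℝ) Γ) W0 = α := hsize_all W0 hW0mem
  have hSizeg : Size (mallows φ n) g W0 ≤ α := hgle W0 hW0mem
  rw [hexpand, hSizeF] at hsum
  nlinarith [mul_nonneg hc0.le (sub_nonneg.mpr hSizeg)]



end Voting
end
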